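/- arXiv:0901.3992 — 3 statements merged into one kernel-verified Lean document; each statement's English description precedes it below -/
import Mathlib

section
/- With the KLR polynomial representation operators as above, for s_l(i) ≠ i one has the quadratic relation: applying σ_{s_l(i)}(l) after σ_i(l) gives multiplication by (-1)^{h_{i_l,i_{l+1}}} (x_i(l+1) - x_i(l))^{h_{i_l,i_{l+1}} + h_{i_{l+1},i_l}} on F_i, i.e. σ_{s_l(i)}(l) ∘ σ_i(l) = (x_i(l) - x_i(l+1))^{h_{i_l,i_{l+1}}} (x_i(l+1) - x_i(l))^{h_{i_{l+1},i_l}} · id on F_i. -/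
open MvPolynomial

/-- The quadratic relation in the KLR polynomial representation: for `s_l(i) ≠ i`,
the composite `σ_{s_l(i)}(l) ∘ σ_i(l)` acts on `F_i` as multiplication by
`(x_i(l) - x_i(l+1))^{h_{i_l, i_{l+1}}} (x_i(l+1) - x_i(l))^{h_{i_{l+1}, i_l}}`,
where `σ_i(l) : F_i → F_{s_l(i)}`, `f ↦ (x(l+1) - x(l))^{h_{i_l,i_{l+1}}} s_l(f)`. -/
theorem klr_quadratic_relation {I : Type*}
    (k : Type*) [Field k] [CharZero k] (m : ℕ)
    (h : I → I → ℕ)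
    (i : Fin m → I) (l : Fin m) (hl : (l : ℕ) + 1 < m)
    (hne : i ∘ Equiv.swap l ⟨(l : ℕ) + 1, hl⟩ ≠ i)
    (f : MvPolynomial (Fin m) k) :
    (X ⟨(l : ℕ) + 1, hl⟩ - X l) ^ (h (i ⟨(l : ℕ) + 1, hl⟩) (i l)) *
        rename (Equiv.swap l ⟨(l : ℕ) + 1, hl⟩)
          ((X ⟨(l : ℕ) + 1, hl⟩ - X l) ^ (h (i l) (i ⟨(l : ℕ) + 1, hl⟩)) *
            rename (Equiv.swap l ⟨(l : ℕ) + 1, hl⟩) f) =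
      (X l - X ⟨(l : ℕ) + 1, hl⟩) ^ (h (i l) (i ⟨(l : ℕ) + 1, hl⟩)) *
        (X ⟨(l : ℕ) + 1, hl⟩ - X l) ^ (h (i ⟨(l : ℕ) + 1, hl⟩) (i l)) * f := by
  set e := Equiv.swap l ⟨(l : ℕ) + 1, hl⟩ with he
  have h1 : rename (R := k) e (rename e f) = f := by
    rw [rename_rename]
    have : (⇑e ∘ ⇑e) = id := by ext x; simp [he]
    rw [this, rename_id, AlgHom.id_apply]
  have h2 : rename (R := k) e (X ⟨(l : ℕ) + 1, hl⟩ - X l) = X l - X ⟨(l : ℕ) + 1, hl⟩ := by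
    simp [he, rename_X, Equiv.swap_apply_left, Equiv.swap_apply_right]
  rw [map_mul, map_pow, h1, h2]
  ring
end

section
/- Let k be a field of characteristic zero and P = k[x_1,...,x_m]. Then P is a free module of rank m! over the subring of symmetric polynomials P^{S_m}. -/
set_option synthInstance.maxHeartbeats 1000000
set_option maxHeartbeats 1000000

open MvPolynomial

namespace ArtinAux

variable (k : Type*) [Field k]

/-- Index type for the Artin monomial basis: exponent of `x_i` is `< m - i`. -/
abbrev D (m : ℕ) := (i : Fin m) → Fin (m - i.1)

noncomputable def vmon (m : ℕ) (a : D m) : MvPolynomial (Fin m) k :=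
  ∏ i, X i ^ (a i : ℕ)

noncomputable def fpoly (m : ℕ) : Polynomial (MvPolynomial (Fin m) k) :=
  ∏ i : Fin m, (Polynomial.X + Polynomial.C (X i))

lemma fpoly_monic (m : ℕ) : (fpoly k m).Monic :=
  Polynomial.monic_prod_of_monic _ _ fun i _ => Polynomial.monic_X_add_C _

lemma fpoly_natDegree (m : ℕ) : (fpoly k m).natDegree = m := by
  rw [fpoly, Polynomial.natDegree_prod _ _ fun i _ => (Polynomial.monic_X_add_C _).ne_zero]
  simp [Polynomial.natDegree_X_add_C]

lemma fpoly_coeff_symm (m t : ℕ) : ((fpoly k m).coeff t).IsSymmetric := by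
  rcases le_or_gt t m with h | h
  · have h' : t ≤ Fintype.card (Fin m) := by simpa using h
    have := MvPolynomial.prod_X_add_C_coeff k (Fin m) t h'
    rw [fpoly, this]
    exact esymm_isSymmetric _ _ _
  · rw [Polynomial.coeff_eq_zero_of_natDegree_lt (by rw [fpoly_natDegree]; exact h)]
    intro e; simp

/-- The submodule of `k[x_0,...,x_m]` spanned over symmetric polynomials by `x_0^t, t ≤ m`. -/
noncomputable def Spn (m : ℕ) :
    Submodule (symmetricSubalgebra (Fin (m+1)) k) (MvPolynomial (Fin (m+1)) k) :=
  Submodule.span _ (Set.range fun t : Fin (m+1) => X 0 ^ (t : ℕ))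

lemma symm_mem_Spn (m : ℕ) {c : MvPolynomial (Fin (m+1)) k} (hc : c.IsSymmetric) :
    c ∈ Spn k m := by
  have h0 : (X 0 : MvPolynomial (Fin (m+1)) k) ^ ((0 : Fin (m+1)) : ℕ) ∈ Spn k m :=
    Submodule.subset_span ⟨0, rfl⟩
  have := Submodule.smul_mem (Spn k m) ⟨c, hc⟩ h0
  simpa [Subalgebra.smul_def, smul_eq_mul] using this

lemma X0_pow_succ_mem_Spn (m : ℕ) : (X 0 : MvPolynomial (Fin (m+1)) k) ^ (m+1) ∈ Spn k m := by
  set f := fpoly k (m+1) with hf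
  have hdeg : f.natDegree = m + 1 := fpoly_natDegree k (m+1)
  have h0 : Polynomial.eval (-(X 0)) f = 0 := by
    rw [hf, fpoly, Polynomial.eval_prod]
    refine Finset.prod_eq_zero (Finset.mem_univ 0) ?_
    simp
  have h1 : ∑ t ∈ Finset.range (m+2), f.coeff t * (-(X 0))^t = 0 := by
    have := Polynomial.eval_eq_sum_range (p := f) (-(X 0))
    rw [hdeg] at this
    rw [← this]; exact h0
  rw [Finset.sum_range_succ] at h1
  have hlead : f.coeff (m+1) = 1 := by
    have := (fpoly_monic k (m+1)).coeff_natDegree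
    rwa [hdeg] at this
  have h2 : ((-1 : MvPolynomial (Fin (m+1)) k))^(m+1) * (X 0)^(m+1)
      = - ∑ t ∈ Finset.range (m+1), f.coeff t * (-(X 0))^t := by
    have := eq_neg_of_add_eq_zero_right h1
    rwa [hlead, one_mul, neg_pow] at this
  have key : (X 0 : MvPolynomial (Fin (m+1)) k)^(m+1)
      = ∑ t ∈ Finset.range (m+1), ((-1)^(m+t) * f.coeff t) * X 0 ^ t := by
    calc (X 0 : MvPolynomial (Fin (m+1)) k)^(m+1)
        = (-1)^(m+1) * ((-1)^(m+1) * (X 0)^(m+1)) := by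
          rw [← mul_assoc, ← mul_pow]; norm_num
      _ = (-1)^(m+1) * - ∑ t ∈ Finset.range (m+1), f.coeff t * (-(X 0))^t := by rw [h2]
      _ = ∑ t ∈ Finset.range (m+1), ((-1)^(m+t) * f.coeff t) * X 0 ^ t := by
          rw [mul_neg, Finset.mul_sum, ← Finset.sum_neg_distrib]
          refine Finset.sum_congr rfl fun t _ => ?_
          rw [neg_pow]; ring
  rw [key]
  refine Submodule.sum_mem _ fun t ht => ?_
  have hsym : ((-1 : MvPolynomial (Fin (m+1)) k)^(m+t) * f.coeff t).IsSymmetric := by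
    intro e
    rw [map_mul, map_pow, map_neg, map_one, fpoly_coeff_symm k (m+1) t e]
  have hgen : (X 0 : MvPolynomial (Fin (m+1)) k) ^ t ∈ Spn k m := by
    refine Submodule.subset_span ⟨⟨t, Finset.mem_range.mp ht⟩, rfl⟩
  have := Submodule.smul_mem (Spn k m) ⟨_, hsym⟩ hgen
  simpa [Subalgebra.smul_def, smul_eq_mul, mul_assoc] using this

lemma X0_mul_mem_Spn (m : ℕ) {y : MvPolynomial (Fin (m+1)) k} (hy : y ∈ Spn k m) :
    X 0 * y ∈ Spn k m := by
  induction hy using Submodule.span_induction with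
  | mem x hx =>
    obtain ⟨t, rfl⟩ := hx
    rw [← pow_succ']
    by_cases h : (t : ℕ) + 1 < m + 1
    · exact Submodule.subset_span ⟨⟨(t : ℕ) + 1, h⟩, rfl⟩
    · have : (t : ℕ) = m := by omega
      rw [this]
      exact X0_pow_succ_mem_Spn k m
  | zero => rw [mul_zero]; exact Submodule.zero_mem _
  | add x y hx hy ihx ihy => rw [mul_add]; exact Submodule.add_mem _ ihx ihy
  | smul a x hx ih => rw [mul_smul_comm]; exact Submodule.smul_mem _ _ ih

lemma X0_pow_mul_mem_Spn (m : ℕ) (n : ℕ) {y : MvPolynomial (Fin (m+1)) k} (hy : y ∈ Spn k m) :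
    X 0 ^ n * y ∈ Spn k m := by
  induction n with
  | zero => simpa using hy
  | succ n ih =>
    rw [pow_succ', mul_assoc]
    exact X0_mul_mem_Spn k m ih

lemma one_mem_Spn (m : ℕ) : (1 : MvPolynomial (Fin (m+1)) k) ∈ Spn k m :=
  symm_mem_Spn k m (fun e => by simp)

lemma mul_mem_Spn (m : ℕ) {x y : MvPolynomial (Fin (m+1)) k}
    (hx : x ∈ Spn k m) (hy : y ∈ Spn k m) : x * y ∈ Spn k m := by
  induction hx using Submodule.span_induction with
  | mem x hx => obtain ⟨t, rfl⟩ := hx; exact X0_pow_mul_mem_Spn k m _ hy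
  | zero => rw [zero_mul]; exact Submodule.zero_mem _
  | add x y hx hy ihx ihy => rw [add_mul]; exact Submodule.add_mem _ ihx ihy
  | smul a x hx ih => rw [smul_mul_assoc]; exact Submodule.smul_mem _ _ ih


noncomputable def gpoly (m : ℕ) : Polynomial (MvPolynomial (Fin (m+1)) k) :=
  ∏ i : Fin m, (Polynomial.X + Polynomial.C (X i.succ))

lemma gpoly_monic (m : ℕ) : (gpoly k m).Monic :=
  Polynomial.monic_prod_of_monic _ _ fun i _ => Polynomial.monic_X_add_C _

lemma gpoly_natDegree (m : ℕ) : (gpoly k m).natDegree = m := by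
  rw [gpoly, Polynomial.natDegree_prod _ _ fun i _ => (Polynomial.monic_X_add_C _).ne_zero]
  simp [Polynomial.natDegree_X_add_C]

lemma fpoly_eq (m : ℕ) :
    fpoly k (m+1) = (Polynomial.X + Polynomial.C (X 0)) * gpoly k m := by
  rw [fpoly, gpoly, Fin.prod_univ_succ]

lemma gpoly_coeff_rec (m t : ℕ) :
    (gpoly k m).coeff t = (fpoly k (m+1)).coeff (t+1) - X 0 * (gpoly k m).coeff (t+1) := by
  rw [fpoly_eq, add_mul, Polynomial.coeff_add, Polynomial.coeff_X_mul, Polynomial.coeff_C_mul]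
  ring

lemma gpoly_coeff_mem_Spn (m t : ℕ) : (gpoly k m).coeff t ∈ Spn k m := by
  -- downward induction: induct on d with t = m - d
  suffices H : ∀ d : ℕ, (gpoly k m).coeff (m - d) ∈ Spn k m by
    rcases le_or_gt t m with h | h
    · have := H (m - t)
      rwa [Nat.sub_sub_self h] at this
    · rw [Polynomial.coeff_eq_zero_of_natDegree_lt (by rw [gpoly_natDegree]; exact h)]
      exact Submodule.zero_mem _
  intro d
  induction d with
  | zero =>
    have : (gpoly k m).coeff (m - 0) = 1 := by
      simpa [gpoly_natDegree] using (gpoly_monic k m).coeff_natDegree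
    rw [this]; exact one_mem_Spn k m
  | succ d ih =>
    rcases le_or_gt m d with hd | hd
    · rw [show m - (d+1) = m - d by omega]; exact ih
    · have hstep : m - d = (m - (d+1)) + 1 := by omega
      rw [gpoly_coeff_rec, ← hstep]
      exact Submodule.sub_mem _ (symm_mem_Spn k m (fpoly_coeff_symm k (m+1) _))
        (X0_mul_mem_Spn k m ih)

lemma emb_esymm_mem_Spn (m : ℕ) {j : ℕ} (hj : j ≤ m) :
    rename Fin.succ (esymm (Fin m) k j) ∈ Spn k m := by
  have hcoeff := Finset.prod_X_add_C_coeff (Finset.univ : Finset (Fin m))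
    (fun i : Fin m => (X i.succ : MvPolynomial (Fin (m+1)) k)) (k := m - j) (by simp)
  have hemb : rename Fin.succ (esymm (Fin m) k j)
      = ∑ t ∈ Finset.powersetCard j (Finset.univ : Finset (Fin m)), ∏ i ∈ t, (X i.succ : MvPolynomial (Fin (m+1)) k) := by
    rw [esymm, map_sum]
    refine Finset.sum_congr rfl fun t _ => ?_
    rw [map_prod]
    exact Finset.prod_congr rfl fun i _ => rename_X _ _
  have hj' : m - (m - j) = j := by omega
  have : (gpoly k m).coeff (m - j)
      = ∑ t ∈ Finset.powersetCard j (Finset.univ : Finset (Fin m)), ∏ i ∈ t, (X i.succ : MvPolynomial (Fin (m+1)) k) := by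
    rw [gpoly]
    rw [hcoeff]
    simp only [Finset.card_univ, Fintype.card_fin, hj']
  rw [hemb, ← this]
  exact gpoly_coeff_mem_Spn k m _

lemma aeval_mem_Spn (m : ℕ) {n : ℕ} (w : Fin n → MvPolynomial (Fin (m+1)) k)
    (hw : ∀ i, w i ∈ Spn k m) (q : MvPolynomial (Fin n) k) : aeval w q ∈ Spn k m := by
  induction q using MvPolynomial.induction_on with
  | C r =>
    rw [aeval_C]
    exact symm_mem_Spn k m (fun e => by rw [algebraMap_eq, rename_C])
  | add p q hp hq => rw [map_add]; exact Submodule.add_mem _ hp hq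
  | mul_X p i hp => rw [map_mul, aeval_X]; exact mul_mem_Spn k m hp (hw i)

lemma emb_symm_mem_Spn (m : ℕ) {c : MvPolynomial (Fin m) k} (hc : c.IsSymmetric) :
    rename Fin.succ c ∈ Spn k m := by
  obtain ⟨q, hq⟩ := (esymmAlgHom_fin_bijective k m).2 ⟨c, hc⟩
  have hc' : aeval (fun i : Fin m => esymm (Fin m) k ((i : ℕ) + 1)) q = c := by
    rw [← esymmAlgHom_apply, hq]
  have hcomp : rename Fin.succ c
      = aeval (fun i : Fin m => rename Fin.succ (esymm (Fin m) k ((i : ℕ) + 1))) q := by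
    rw [← hc']
    exact DFunLike.congr_fun (comp_aeval (fun i : Fin m => esymm (Fin m) k ((i : ℕ) + 1)) (rename Fin.succ)) q
  rw [hcomp]
  exact aeval_mem_Spn k m _ (fun i => emb_esymm_mem_Spn k m (by omega)) q

noncomputable def wmon (m : ℕ) (b : D m) : MvPolynomial (Fin (m+1)) k :=
  ∏ i : Fin m, X i.succ ^ (b i : ℕ)

lemma X0_pow_mul_wmon_eq (m : ℕ) (t : Fin (m+1)) (b : D m) :
    X 0 ^ (t : ℕ) * wmon k m b = vmon k (m+1)
      (fun i => Fin.cases (Fin.cast (by simp) t) (fun j => Fin.cast (by simp) (b j)) i) := by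
  rw [vmon, Fin.prod_univ_succ]
  simp [wmon]
  rfl

lemma mul_wmon_mem (m : ℕ) (b : D m) {x : MvPolynomial (Fin (m+1)) k} (hx : x ∈ Spn k m) :
    x * wmon k m b ∈ Submodule.span (symmetricSubalgebra (Fin (m+1)) k)
      (Set.range (vmon k (m+1))) := by
  induction hx using Submodule.span_induction with
  | mem x hx =>
    obtain ⟨t, rfl⟩ := hx
    rw [X0_pow_mul_wmon_eq]
    exact Submodule.subset_span ⟨_, rfl⟩
  | zero => rw [zero_mul]; exact Submodule.zero_mem _
  | add x y hx hy ihx ihy => rw [add_mul]; exact Submodule.add_mem _ ihx ihy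
  | smul a x hx ih => rw [smul_mul_assoc]; exact Submodule.smul_mem _ _ ih

lemma vmon_succ_decomp (m : ℕ) (a : D (m+1)) :
    vmon k (m+1) a = X 0 ^ ((a 0 : ℕ)) * wmon k m (fun j => Fin.cast (by simp) (a j.succ)) := by
  rw [vmon, Fin.prod_univ_succ]
  simp [wmon]

lemma spn_mul_mem_span (m : ℕ) {x y : MvPolynomial (Fin (m+1)) k} (hx : x ∈ Spn k m)
    (hy : y ∈ Submodule.span (symmetricSubalgebra (Fin (m+1)) k) (Set.range (vmon k (m+1)))) :
    x * y ∈ Submodule.span (symmetricSubalgebra (Fin (m+1)) k) (Set.range (vmon k (m+1))) := by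
  induction hy using Submodule.span_induction with
  | mem y hy =>
    obtain ⟨a, rfl⟩ := hy
    rw [vmon_succ_decomp, ← mul_assoc]
    refine mul_wmon_mem k m _ (mul_mem_Spn k m hx ?_)
    have : (X 0 : MvPolynomial (Fin (m+1)) k) ^ ((a 0 : ℕ)) ∈ Spn k m := by
      refine Submodule.subset_span ⟨Fin.cast (by simp) (a 0), by rfl⟩
    exact this
  | zero => rw [mul_zero]; exact Submodule.zero_mem _
  | add y z hy hz ihy ihz => rw [mul_add]; exact Submodule.add_mem _ ihy ihz
  | smul a y hy ih => rw [mul_smul_comm]; exact Submodule.smul_mem _ _ ih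

lemma emb_mem_span (m : ℕ) {c : MvPolynomial (Fin m) k}
    (hc : c ∈ Submodule.span (symmetricSubalgebra (Fin m) k) (Set.range (vmon k m))) :
    rename Fin.succ c ∈ Submodule.span (symmetricSubalgebra (Fin (m+1)) k)
      (Set.range (vmon k (m+1))) := by
  induction hc using Submodule.span_induction with
  | mem c hc =>
    obtain ⟨b, rfl⟩ := hc
    have : rename Fin.succ (vmon k m b) = wmon k m b := by
      rw [vmon, map_prod]
      exact Finset.prod_congr rfl fun i _ => by rw [map_pow, rename_X]
    rw [this, ← one_mul (wmon k m b)]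
    exact mul_wmon_mem k m b (one_mem_Spn k m)
  | zero => rw [map_zero]; exact Submodule.zero_mem _
  | add x y hx hy ihx ihy => rw [map_add]; exact Submodule.add_mem _ ihx ihy
  | smul s x hx ih =>
    rw [Subalgebra.smul_def, smul_eq_mul, map_mul]
    exact spn_mul_mem_span k m (emb_symm_mem_Spn k m s.2) ih

lemma finSuccEquiv_symm_C (m : ℕ) (c : MvPolynomial (Fin m) k) :
    (finSuccEquiv k m).symm (Polynomial.C c) = rename Fin.succ c := by
  apply (finSuccEquiv k m).injective
  rw [AlgEquiv.apply_symm_apply]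
  induction c using MvPolynomial.induction_on with
  | C r => rw [rename_C]; simp [finSuccEquiv_apply]
  | add p q hp hq => rw [map_add, map_add, map_add, hp, hq]
  | mul_X p i hp => rw [map_mul, map_mul, map_mul, rename_X, hp, finSuccEquiv_X_succ]

lemma X0_mem_Spn (m : ℕ) : (X 0 : MvPolynomial (Fin (m+1)) k) ∈ Spn k m := by
  have := X0_mul_mem_Spn k m (one_mem_Spn k m)
  rwa [mul_one] at this

theorem mem_span_vmon (m : ℕ) (p : MvPolynomial (Fin m) k) :
    p ∈ Submodule.span (symmetricSubalgebra (Fin m) k) (Set.range (vmon k m)) := by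
  induction m with
  | zero =>
    have hp : p.IsSymmetric := by
      intro e
      rw [show ⇑e = id from funext fun i => i.elim0]
      exact rename_id_apply p
    have hgen : vmon k 0 (fun i => i.elim0) ∈ Submodule.span
        (symmetricSubalgebra (Fin 0) k) (Set.range (vmon k 0)) :=
      Submodule.subset_span ⟨_, rfl⟩
    have h1 : vmon k 0 (fun i => i.elim0) = 1 := by simp [vmon]
    have := Submodule.smul_mem _ (⟨p, hp⟩ : symmetricSubalgebra (Fin 0) k) hgen
    rwa [h1, Subalgebra.smul_def, smul_eq_mul, mul_one] at this
  | succ m ih =>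
    suffices H : ∀ q : Polynomial (MvPolynomial (Fin m) k),
        (finSuccEquiv k m).symm q ∈ Submodule.span (symmetricSubalgebra (Fin (m+1)) k)
          (Set.range (vmon k (m+1))) by
      have := H (finSuccEquiv k m p)
      rwa [AlgEquiv.symm_apply_apply] at this
    intro q
    induction q using Polynomial.induction_on with
    | C c => rw [finSuccEquiv_symm_C]; exact emb_mem_span k m (ih c)
    | add p q hp hq => rw [map_add]; exact Submodule.add_mem _ hp hq
    | monomial n a hrec =>
      rw [pow_succ, ← mul_assoc, map_mul]
      have hX : (finSuccEquiv k m).symm Polynomial.X = X 0 := by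
        rw [← finSuccEquiv_X_zero (R := k) (n := m), AlgEquiv.symm_apply_apply]
      rw [hX, mul_comm]
      exact spn_mul_mem_span k m (X0_mem_Spn k m) hrec

section Galois

variable (k : Type*) [Field k] (m : ℕ)

/-- The action of `S_m` on `k[x_1,...,x_m]` by permuting variables, as ring automorphisms. -/
noncomputable def permHom : Equiv.Perm (Fin m) →* (MvPolynomial (Fin m) k ≃+* MvPolynomial (Fin m) k) where
  toFun σ := (renameEquiv k σ).toRingEquiv
  map_one' := RingEquiv.ext fun p => by
    show rename ⇑(1 : Equiv.Perm (Fin m)) p = p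
    rw [Equiv.Perm.coe_one, rename_id_apply]
  map_mul' σ τ := RingEquiv.ext fun p => by
    show rename ⇑(σ * τ) p = rename ⇑σ (rename ⇑τ p)
    rw [rename_rename, Equiv.Perm.coe_mul]

lemma permHom_apply (σ : Equiv.Perm (Fin m)) (p : MvPolynomial (Fin m) k) :
    permHom k m σ p = rename σ p := rfl

lemma fracRingEquiv_ext (e₁ e₂ : FractionRing (MvPolynomial (Fin m) k) ≃+*
      FractionRing (MvPolynomial (Fin m) k))
    (h : ∀ p : MvPolynomial (Fin m) k,
      e₁ (algebraMap (MvPolynomial (Fin m) k) _ p) = e₂ (algebraMap (MvPolynomial (Fin m) k) _ p)) :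
    e₁ = e₂ := by
  have h2 : (e₁ : FractionRing (MvPolynomial (Fin m) k) →+* FractionRing (MvPolynomial (Fin m) k))
      = e₂ := IsLocalization.ringHom_ext (nonZeroDivisors (MvPolynomial (Fin m) k))
        (RingHom.ext h)
  exact RingEquiv.ext fun x => RingHom.congr_fun h2 x

lemma mapNZD (σ : Equiv.Perm (Fin m)) :
    Submonoid.map (permHom k m σ).toMonoidHom
      (nonZeroDivisors (MvPolynomial (Fin m) k)) = nonZeroDivisors (MvPolynomial (Fin m) k) :=
  MulEquivClass.map_nonZeroDivisors (permHom k m σ)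

/-- The action of `S_m` on the fraction field `k(x_1,...,x_m)`. -/
noncomputable def permHomL : Equiv.Perm (Fin m) →*
    (FractionRing (MvPolynomial (Fin m) k) ≃+* FractionRing (MvPolynomial (Fin m) k)) :=
  MonoidHom.mk' (fun σ => IsLocalization.ringEquivOfRingEquiv _ _ (permHom k m σ) (mapNZD k m σ))
    (fun σ τ => by
      refine fracRingEquiv_ext k m _ _ fun p => ?_
      show IsLocalization.ringEquivOfRingEquiv (FractionRing (MvPolynomial (Fin m) k))
          (FractionRing (MvPolynomial (Fin m) k)) (permHom k m (σ * τ)) (mapNZD k m (σ * τ))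
          (algebraMap (MvPolynomial (Fin m) k) _ p)
        = IsLocalization.ringEquivOfRingEquiv (FractionRing (MvPolynomial (Fin m) k))
            (FractionRing (MvPolynomial (Fin m) k)) (permHom k m σ) (mapNZD k m σ)
            (IsLocalization.ringEquivOfRingEquiv (FractionRing (MvPolynomial (Fin m) k))
              (FractionRing (MvPolynomial (Fin m) k)) (permHom k m τ) (mapNZD k m τ)
              (algebraMap (MvPolynomial (Fin m) k) _ p))
      rw [IsLocalization.ringEquivOfRingEquiv_eq, IsLocalization.ringEquivOfRingEquiv_eq,
        IsLocalization.ringEquivOfRingEquiv_eq]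
      rw [permHom_apply, permHom_apply, permHom_apply, rename_rename, Equiv.Perm.coe_mul])

noncomputable instance permAction :
    MulSemiringAction (Equiv.Perm (Fin m)) (FractionRing (MvPolynomial (Fin m) k)) :=
  MulSemiringAction.compHom _ (permHomL k m)

lemma perm_smul_algebraMap (σ : Equiv.Perm (Fin m)) (p : MvPolynomial (Fin m) k) :
    σ • (algebraMap (MvPolynomial (Fin m) k) (FractionRing (MvPolynomial (Fin m) k)) p)
      = algebraMap _ _ (rename σ p) := by
  show IsLocalization.ringEquivOfRingEquiv _ _ (permHom k m σ)
      (mapNZD k m σ) (algebraMap _ _ p) = _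
  exact IsLocalization.ringEquivOfRingEquiv_eq (mapNZD k m σ) p

instance permFaithful :
    FaithfulSMul (Equiv.Perm (Fin m)) (FractionRing (MvPolynomial (Fin m) k)) where
  eq_of_smul_eq_smul {σ τ} h := by
    apply Equiv.ext
    intro i
    have h1 := h (algebraMap (MvPolynomial (Fin m) k) _ (X i))
    rw [perm_smul_algebraMap, perm_smul_algebraMap] at h1
    have h2 := IsFractionRing.injective (MvPolynomial (Fin m) k)
      (FractionRing (MvPolynomial (Fin m) k)) h1
    rw [rename_X, rename_X] at h2
    exact X_injective h2

end Galois

lemma card_D (m : ℕ) : Fintype.card (D m) = m.factorial := by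
  induction m with
  | zero => simp [D]
  | succ m ih =>
    have h1 : Fintype.card (D (m+1)) = ∏ i : Fin (m+1), (m + 1 - (i : ℕ)) := by
      simp [Fintype.card_pi]
    have h2 : Fintype.card (D m) = ∏ i : Fin m, (m - (i : ℕ)) := by
      simp [Fintype.card_pi]
    rw [h1, Fin.prod_univ_succ]
    simp only [Fin.val_zero, Nat.sub_zero, Fin.val_succ, Nat.succ_sub_succ]
    rw [← h2, ih, Nat.factorial_succ]

lemma mem_fixed_iff (m : ℕ) (x : FractionRing (MvPolynomial (Fin m) k)) :
    x ∈ FixedPoints.subfield (Equiv.Perm (Fin m)) (FractionRing (MvPolynomial (Fin m) k))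
      ↔ ∀ σ : Equiv.Perm (Fin m), σ • x = x := by
  rw [FixedPoints.subfield, ← SetLike.mem_coe, Subfield.coe_copy]
  exact MulAction.mem_fixedPoints

lemma symm_algebraMap_mem_fixed (m : ℕ) {p : MvPolynomial (Fin m) k} (hp : p.IsSymmetric) :
    algebraMap (MvPolynomial (Fin m) k) (FractionRing (MvPolynomial (Fin m) k)) p
      ∈ FixedPoints.subfield (Equiv.Perm (Fin m)) (FractionRing (MvPolynomial (Fin m) k)) := by
  rw [mem_fixed_iff]
  intro σ
  rw [perm_smul_algebraMap, hp σ]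

lemma linearIndependent_vmon (m : ℕ) : LinearIndependent (symmetricSubalgebra (Fin m) k) (vmon k m) := by
  classical
  set R := MvPolynomial (Fin m) k with hR
  set L := FractionRing R with hL
  set K := FixedPoints.subfield (Equiv.Perm (Fin m)) L with hK
  set u : D m → L := fun a => algebraMap R L (vmon k m a) with hu
  -- every element in the image of R lies in the K-span of u
  have hmem : ∀ r : R, algebraMap R L r ∈ Submodule.span K (Set.range u) := by
    intro r
    have hr := mem_span_vmon k m r
    induction hr using Submodule.span_induction with
    | mem x hx =>
      obtain ⟨a, rfl⟩ := hx
      exact Submodule.subset_span ⟨a, rfl⟩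
    | zero => rw [map_zero]; exact Submodule.zero_mem _
    | add x y hx hy ihx ihy => rw [map_add]; exact Submodule.add_mem _ ihx ihy
    | smul s x hx ih =>
      rw [Subalgebra.smul_def, smul_eq_mul, map_mul]
      have := Submodule.smul_mem _ (⟨algebraMap R L s, symm_algebraMap_mem_fixed k m s.2⟩ : K) ih
      rwa [Subfield.smul_def, smul_eq_mul] at this
  -- the u span L over K
  have hspan : ⊤ ≤ Submodule.span K (Set.range u) := by
    rintro z -
    obtain ⟨p, q, hq, rfl⟩ := IsFractionRing.div_surjective (A := R) z
    have hq0 : q ≠ 0 := nonZeroDivisors.ne_zero hq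
    set Q : R := ∏ σ : Equiv.Perm (Fin m), rename σ q with hQdef
    have hQsym : Q.IsSymmetric := by
      intro e
      rw [hQdef, map_prod]
      refine Fintype.prod_equiv (Equiv.mulLeft e) _ _ fun σ => ?_
      rw [rename_rename, show ⇑e ∘ ⇑σ = ⇑(Equiv.mulLeft e σ) from by ext x; simp]
    have hQ0 : Q ≠ 0 := by
      rw [hQdef]
      refine Finset.prod_ne_zero_iff.mpr fun σ _ => ?_
      intro h
      exact hq0 (by simpa using (rename_injective _ σ.injective) (by simpa using h))
    set Q' : R := ∏ σ ∈ Finset.univ.erase (1 : Equiv.Perm (Fin m)), rename (⇑σ) q with hQ'def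
    have hsplit : Q = q * Q' := by
      rw [hQdef, hQ'def, ← Finset.mul_prod_erase _ _ (Finset.mem_univ (1 : Equiv.Perm (Fin m)))]
      congr 1
      rw [Equiv.Perm.coe_one, rename_id_apply]
    have hq0' : algebraMap R L q ≠ 0 := fun h => hq0 (IsFractionRing.injective R L (by simpa using h))
    have hQ0' : algebraMap R L Q ≠ 0 := fun h => hQ0 (IsFractionRing.injective R L (by simpa using h))
    have hz : algebraMap R L p / algebraMap R L q
        = (algebraMap R L Q)⁻¹ * algebraMap R L (p * Q') := by
      rw [eq_comm, inv_mul_eq_iff_eq_mul₀ hQ0', hsplit, map_mul, map_mul]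
      rw [div_eq_mul_inv]
      linear_combination (-(algebraMap R L p * algebraMap R L Q')) * mul_inv_cancel₀ hq0'
    rw [hz]
    have hQK : algebraMap R L Q ∈ K := symm_algebraMap_mem_fixed k m hQsym
    have := Submodule.smul_mem _ ((⟨algebraMap R L Q, hQK⟩ : K)⁻¹) (hmem (p * Q'))
    rwa [Subfield.smul_def, smul_eq_mul] at this
  -- K-linear independence of u
  have hcard : Fintype.card (D m) = Module.finrank K L := by
    rw [card_D, hK, FixedPoints.finrank_eq_card, Fintype.card_perm, Fintype.card_fin]
  have hliL : LinearIndependent K u :=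
    linearIndependent_of_top_le_span_of_card_eq_finrank hspan hcard
  -- transfer to the symmetric subalgebra
  rw [Fintype.linearIndependent_iff]
  intro g hg a
  have hsum : ∑ b : D m, (⟨algebraMap R L (g b), symm_algebraMap_mem_fixed k m (g b).2⟩ : K) • u b
      = 0 := by
    have h2 := congrArg (algebraMap R L) hg
    rw [map_sum, map_zero] at h2
    rw [← h2]
    refine Finset.sum_congr rfl fun b _ => ?_
    rw [Subfield.smul_def, smul_eq_mul, Subalgebra.smul_def, smul_eq_mul, map_mul]
  have h3 := Fintype.linearIndependent_iff.mp hliL _ hsum a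
  have h4 : algebraMap R L (g a) = 0 := by
    have := congrArg Subtype.val h3
    simpa using this
  have h5 : (g a : R) = 0 := IsFractionRing.injective R L (by simpa using h4)
  exact Subtype.ext h5

end ArtinAux

open ArtinAux in
/-- Over a field `k` of characteristic zero, `P = k[x_1,...,x_m]` is a free module
of rank `m!` over the subring `P^{S_m}` of symmetric polynomials. -/
theorem polynomials_free_over_symmetric (k : Type*) [Field k] [CharZero k] (m : ℕ) :
    Module.Free (MvPolynomial.symmetricSubalgebra (Fin m) k) (MvPolynomial (Fin m) k) ∧
      Module.rank (MvPolynomial.symmetricSubalgebra (Fin m) k) (MvPolynomial (Fin m) k)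
        = m.factorial := by
  have b : Module.Basis (D m) (MvPolynomial.symmetricSubalgebra (Fin m) k) (MvPolynomial (Fin m) k) :=
    Module.Basis.mk (linearIndependent_vmon k m) (fun x _ => mem_span_vmon k m x)
  haveI : Nontrivial (MvPolynomial.symmetricSubalgebra (Fin m) k) :=
    nontrivial_of_ne 0 1 fun h => by
      have := congrArg Subtype.val h
      simpa using this
  constructor
  · exact Module.Free.of_basis b
  · rw [rank_eq_card_basis b, card_D]
end

section
/- Let k be a field of characteristic zero, P = k[x_1,...,x_m] with its S_m-action permuting variables, and S = P^{S_m}. The nil-Hecke algebra NH_m, defined as the subalgebra of End_S(P) generated by the multiplication operators x_1,...,x_m and the Demazure operators ∂_1,...,∂_{m-1}, acts faithfully on P; equivalently, the defining representation of NH_m on P is injective. -/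
open MvPolynomial Finset

variable (m : ℕ)

/-- Coxeter length of `w ∈ S_m` (= number of inversions). -/
def lenPerm (w : Equiv.Perm (Fin m)) : ℕ :=
  (Finset.univ.filter (fun p : Fin m × Fin m => p.1 < p.2 ∧ w p.2 < w p.1)).card

/-- The simple transposition `s_l = (l, l+1)` in `S_m`. -/
def simpleRefl (l : {l : ℕ // l + 1 < m}) : Equiv.Perm (Fin m) :=
  Equiv.swap ⟨l, Nat.lt_of_succ_lt l.2⟩ ⟨(l : ℕ) + 1, l.2⟩

lemma swap_adj {a b x y : Fin m} (hab : (a:ℕ)+1 = b) (hxy : x < y)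
    (h : Equiv.swap a b y < Equiv.swap a b x) : x = a ∧ y = b := by
  rw [Equiv.swap_apply_def, Equiv.swap_apply_def] at h
  split_ifs at h <;> simp only [Fin.ext_iff, Fin.lt_def] at * <;> omega

lemma lenPerm_one : lenPerm m 1 = 0 := by
  simp only [lenPerm]
  rw [Finset.card_eq_zero, Finset.filter_eq_empty_iff]
  rintro p -
  simp only [Equiv.Perm.coe_one, id_eq, not_and]
  intro h1 h2
  exact absurd (h1.trans h2) (lt_irrefl _)

lemma lenPerm_mul_le (l : {l : ℕ // l + 1 < m}) (u : Equiv.Perm (Fin m)) :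
    lenPerm m (simpleRefl m l * u) ≤ lenPerm m u + 1 := by
  classical
  set a : Fin m := ⟨l, Nat.lt_of_succ_lt l.2⟩
  set b : Fin m := ⟨(l : ℕ) + 1, l.2⟩
  have hab : (a:ℕ)+1 = b := rfl
  have hsub : (Finset.univ.filter (fun p : Fin m × Fin m =>
      p.1 < p.2 ∧ (simpleRefl m l * u) p.2 < (simpleRefl m l * u) p.1)) ⊆
      insert (u⁻¹ a, u⁻¹ b)
        (Finset.univ.filter (fun p : Fin m × Fin m => p.1 < p.2 ∧ u p.2 < u p.1)) := by
    intro p hp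
    simp only [Finset.mem_filter, Finset.mem_univ, true_and] at hp
    obtain ⟨h1, h2⟩ := hp
    rcases lt_or_gt_of_ne (fun he : u p.2 = u p.1 => (ne_of_lt h1) (u.injective he).symm) with hlt | hgt
    · simp only [Finset.mem_insert, Finset.mem_filter, Finset.mem_univ, true_and]
      exact Or.inr ⟨h1, hlt⟩
    · have := swap_adj m hab hgt (by simpa [simpleRefl, Equiv.Perm.mul_apply] using h2)
      simp only [Finset.mem_insert]
      left
      have e1 : p.1 = u⁻¹ a := by rw [← this.1]; simp
      have e2 : p.2 = u⁻¹ b := by rw [← this.2]; simp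
      exact Prod.ext e1 e2
  calc lenPerm m (simpleRefl m l * u) ≤ _ := Finset.card_le_card hsub
    _ ≤ _ + 1 := Finset.card_insert_le _ _

lemma lenPerm_mul_ge (l : {l : ℕ // l + 1 < m}) (u : Equiv.Perm (Fin m)) :
    lenPerm m u ≤ lenPerm m (simpleRefl m l * u) + 1 := by
  have := lenPerm_mul_le m l (simpleRefl m l * u)
  rwa [← mul_assoc, show simpleRefl m l * simpleRefl m l = 1 from Equiv.swap_mul_self _ _,
    one_mul] at this

lemma len_prod_le (L : List {l : ℕ // l + 1 < m}) :
    lenPerm m ((L.map (simpleRefl m)).prod) ≤ L.length := by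
  induction L with
  | nil => simp [lenPerm_one]
  | cons l L ih =>
    simp only [List.map_cons, List.prod_cons, List.length_cons]
    calc lenPerm m (simpleRefl m l * (L.map (simpleRefl m)).prod)
        ≤ lenPerm m ((L.map (simpleRefl m)).prod) + 1 := lenPerm_mul_le m l _
      _ ≤ L.length + 1 := by omega

section Key

variable (k : Type*) [Field k] [CharZero k]

local notation "P" => MvPolynomial (Fin m) k
local notation "F" => FractionRing (MvPolynomial (Fin m) k)

noncomputable def chi (u : Equiv.Perm (Fin m)) : P →+* F :=
  (algebraMap P F).comp (rename (σ := Fin m) (u : Fin m → Fin m)).toRingHom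

lemma chi_injective (u : Equiv.Perm (Fin m)) : Function.Injective (chi m k u) :=
  (IsFractionRing.injective P F).comp (rename_injective _ u.injective)

lemma chi_apply (u : Equiv.Perm (Fin m)) (f : P) :
    chi m k u f = algebraMap P F (rename (u : Fin m → Fin m) f) := rfl

noncomputable def sig (l : {l : ℕ // l + 1 < m}) : F →+* F :=
  IsFractionRing.lift (chi_injective m k (simpleRefl m l))

lemma sig_algebraMap (l : {l : ℕ // l + 1 < m}) (f : P) :
    sig m k l (algebraMap P F f) = algebraMap P F (rename (simpleRefl m l : Fin m → Fin m) f) :=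
  IsFractionRing.lift_algebraMap _ f

lemma key (D : {l : ℕ // l + 1 < m} → Module.End k (MvPolynomial (Fin m) k))
    (hD : ∀ (l : {l : ℕ // l + 1 < m}) (f : MvPolynomial (Fin m) k),
      (X ⟨l, Nat.lt_of_succ_lt l.2⟩ - X ⟨(l : ℕ) + 1, l.2⟩) * D l f =
        f - rename (simpleRefl m l) f)
    (L : List {l : ℕ // l + 1 < m}) :
    ∃ b : Equiv.Perm (Fin m) → F,
      (∀ f : P, algebraMap P F (((L.map D).prod) f)
          = ∑ u : Equiv.Perm (Fin m), b u * chi m k u f) ∧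
      (∀ u, b u ≠ 0 → lenPerm m u ≤ L.length ∧
        (lenPerm m u = L.length → u = (L.map (simpleRefl m)).prod)) ∧
      (L.length = lenPerm m ((L.map (simpleRefl m)).prod) →
        b ((L.map (simpleRefl m)).prod) ≠ 0) := by
  classical
  induction L with
  | nil =>
    refine ⟨fun u => if u = 1 then 1 else 0, fun f => ?_, fun u hu => ?_, fun _ => ?_⟩
    · simp [chi_apply, Finset.sum_ite_eq' Finset.univ (1 : Equiv.Perm (Fin m))]
    · have : u = 1 := by by_contra h; simp [h] at hu
      subst this
      simp [lenPerm_one]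
    · simp
  | cons l L ih =>
    obtain ⟨b', h1, h2, h3⟩ := ih
    set s := simpleRefl m l with hs
    set aF : Fin m := ⟨l, Nat.lt_of_succ_lt l.2⟩
    set bF : Fin m := ⟨(l : ℕ) + 1, l.2⟩
    have habF : aF ≠ bF := by
      simp only [aF, bF, Fin.ne_iff_vne]; omega
    set d : F := algebraMap P F (X aF - X bF) with hd_def
    have hd : d ≠ 0 := by
      rw [hd_def, Ne, map_eq_zero_iff _ (IsFractionRing.injective P F), sub_eq_zero]
      exact fun h => habF (X_injective h)
    set σ : F →+* F := sig m k l with hσ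
    have hσne : ∀ x : F, x ≠ 0 → σ x ≠ 0 := fun x hx h0 =>
      hx (σ.injective (by simpa using h0))
    set w' : Equiv.Perm (Fin m) := (L.map (simpleRefl m)).prod with hw'
    set b : Equiv.Perm (Fin m) → F := fun v => d⁻¹ * (b' v - σ (b' (s * v))) with hb
    have hss : ∀ v : Equiv.Perm (Fin m), s * (s * v) = v := fun v => by
      rw [← mul_assoc, show s * s = 1 from Equiv.swap_mul_self _ _, one_mul]
    refine ⟨b, fun f => ?_, fun v hv => ?_, fun hred => ?_⟩
    · set g : P := ((L.map D).prod) f with hg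
      have e0 := hD l g
      have e1 : d * algebraMap P F (D l g)
          = algebraMap P F g - algebraMap P F (rename (s : Fin m → Fin m) g) := by
        rw [hd_def, ← map_mul, e0, map_sub]
      have e2 : algebraMap P F (rename (s : Fin m → Fin m) g) = σ (algebraMap P F g) := by
        rw [hσ, sig_algebraMap]
      have e3 : σ (algebraMap P F g) = ∑ u : Equiv.Perm (Fin m), σ (b' u) * chi m k (s * u) f := by
        rw [h1 f, map_sum]
        refine Finset.sum_congr rfl fun u _ => ?_
        rw [map_mul]
        congr 1
        rw [chi_apply, hσ, sig_algebraMap, chi_apply, rename_rename]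
        rfl
      have e4 : ∑ u : Equiv.Perm (Fin m), σ (b' u) * chi m k (s * u) f
          = ∑ v : Equiv.Perm (Fin m), σ (b' (s * v)) * chi m k v f := by
        rw [← Equiv.sum_comp (Equiv.mulLeft s) (fun v => σ (b' (s * v)) * chi m k v f)]
        refine Finset.sum_congr rfl fun u _ => ?_
        simp only [Equiv.coe_mulLeft]
        rw [hss]
      have e5 : algebraMap P F (D l g) = d⁻¹ * (algebraMap P F g - σ (algebraMap P F g)) := by
        rw [eq_inv_mul_iff_mul_eq₀ hd, e1, e2]
      calc algebraMap P F ((((l :: L).map D).prod) f)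
          = algebraMap P F (D l g) := by
            simp only [List.map_cons, List.prod_cons, Module.End.mul_apply, hg]
        _ = d⁻¹ * (algebraMap P F g - σ (algebraMap P F g)) := e5
        _ = d⁻¹ * ((∑ u : Equiv.Perm (Fin m), b' u * chi m k u f)
              - ∑ v : Equiv.Perm (Fin m), σ (b' (s * v)) * chi m k v f) := by
            rw [e3, e4, h1 f]
        _ = ∑ v : Equiv.Perm (Fin m), b v * chi m k v f := by
            rw [← Finset.sum_sub_distrib, Finset.mul_sum]
            refine Finset.sum_congr rfl fun v _ => ?_
            rw [hb]
            ring
    · have hor : b' v ≠ 0 ∨ b' (s * v) ≠ 0 := by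
        by_contra h
        push_neg at h
        apply hv
        rw [hb]
        simp [h.1, h.2]
      have hle : lenPerm m v ≤ (l :: L).length := by
        rcases hor with h | h
        · exact le_trans (h2 v h).1 (by simp)
        · have := (h2 _ h).1
          have hge2 := lenPerm_mul_ge m l v
          rw [← hs] at hge2
          simp only [List.length_cons]
          omega
      refine ⟨hle, fun heq => ?_⟩
      simp only [List.length_cons] at heq
      have hb'v : b' v = 0 := by
        by_contra h
        have := (h2 v h).1
        omega
      have hsv : b' (s * v) ≠ 0 := by
        rcases hor with h | h
        · exact absurd hb'v h
        · exact h
      have hlen_sv : lenPerm m (s * v) = L.length := by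
        have h1' := (h2 _ hsv).1
        have h2' := lenPerm_mul_ge m l v
        rw [← hs] at h2'
        omega
      have : s * v = w' := (h2 _ hsv).2 hlen_sv
      simp only [List.map_cons, List.prod_cons]
      rw [← hw', ← this, hss]
    · simp only [List.map_cons, List.prod_cons, List.length_cons, ← hw', ← hs] at hred ⊢
      have hw'le : lenPerm m w' ≤ L.length := len_prod_le m L
      have hge : L.length ≤ lenPerm m w' := by
        have hle2 := lenPerm_mul_le m l w'
        rw [← hs] at hle2
        omega
      have hredL : L.length = lenPerm m w' := le_antisymm hge hw'le
      have hb'w' : b' w' ≠ 0 := h3 hredL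
      have hb'sw : b' (s * w') = 0 := by
        by_contra h
        have hle := (h2 _ h).1
        omega
      simp only [hb]
      simp only [hss]
      rw [hb'sw, zero_sub]
      exact mul_ne_zero (inv_ne_zero hd) (neg_ne_zero.mpr (hσne _ hb'w'))

theorem nilHecke_faithful' (D : {l : ℕ // l + 1 < m} → Module.End k (MvPolynomial (Fin m) k))
    (hD : ∀ (l : {l : ℕ // l + 1 < m}) (f : MvPolynomial (Fin m) k),
      (X ⟨l, Nat.lt_of_succ_lt l.2⟩ - X ⟨(l : ℕ) + 1, l.2⟩) * D l f =
        f - rename (simpleRefl m l) f)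
    (R : Equiv.Perm (Fin m) → List {l : ℕ // l + 1 < m})
    (hR : ∀ w : Equiv.Perm (Fin m),
      ((R w).map (simpleRefl m)).prod = w ∧ (R w).length = lenPerm m w)
    (c : Equiv.Perm (Fin m) → MvPolynomial (Fin m) k)
    (hzero : ∑ w : Equiv.Perm (Fin m),
      (LinearMap.mulLeft k (c w) : Module.End k (MvPolynomial (Fin m) k))
        * ((R w).map D).prod = 0) :
    ∀ w : Equiv.Perm (Fin m), c w = 0 := by
  classical
  by_contra hc
  push_neg at hc
  obtain ⟨w1, hw1⟩ := hc
  choose b hb1 hb2 hb3 using fun w => key m k D hD (R w)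
  have halg : Function.Injective (algebraMap P F) := IsFractionRing.injective P F
  have hz : ∀ f : P, ∑ w : Equiv.Perm (Fin m), c w * ((R w).map D).prod f = 0 := by
    intro f
    have := LinearMap.ext_iff.mp hzero f
    simpa [LinearMap.sum_apply, Module.End.mul_apply, LinearMap.mulLeft_apply] using this
  have hz2 : ∀ f : P, ∑ u : Equiv.Perm (Fin m),
      (∑ w : Equiv.Perm (Fin m), algebraMap P F (c w) * b w u) * chi m k u f = 0 := by
    intro f
    have h0 := congrArg (algebraMap P F) (hz f)
    rw [map_sum, map_zero] at h0
    calc ∑ u : Equiv.Perm (Fin m), (∑ w : Equiv.Perm (Fin m),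
            algebraMap P F (c w) * b w u) * chi m k u f
        = ∑ u : Equiv.Perm (Fin m), ∑ w : Equiv.Perm (Fin m),
            algebraMap P F (c w) * (b w u * chi m k u f) := by
          refine Finset.sum_congr rfl fun u _ => ?_
          rw [Finset.sum_mul]
          exact Finset.sum_congr rfl fun w _ => by ring
      _ = ∑ w : Equiv.Perm (Fin m), ∑ u : Equiv.Perm (Fin m),
            algebraMap P F (c w) * (b w u * chi m k u f) := Finset.sum_comm
      _ = ∑ w : Equiv.Perm (Fin m), algebraMap P F (c w * ((R w).map D).prod f) := by
          refine Finset.sum_congr rfl fun w _ => ?_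
          rw [← Finset.mul_sum, ← hb1 w f, map_mul]
      _ = 0 := h0
  have ha : ∀ u : Equiv.Perm (Fin m),
      (∑ w : Equiv.Perm (Fin m), algebraMap P F (c w) * b w u) = 0 := by
    set χM : Equiv.Perm (Fin m) → (P →* F) := fun u => (chi m k u).toMonoidHom with hχM
    have hinj : Function.Injective χM := by
      intro u v huv
      ext i
      have := DFunLike.congr_fun huv (X i)
      simp only [hχM, RingHom.toMonoidHom_eq_coe, MonoidHom.coe_coe, chi_apply, rename_X] at this
      exact congrArg Fin.val (X_injective (halg this))
    have li := (linearIndependent_monoidHom P F).comp χM hinj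
    refine Fintype.linearIndependent_iff.mp li _ ?_
    funext f
    have := hz2 f
    simpa [Finset.sum_apply, hχM] using this
  obtain ⟨w0, hw0mem, hw0max⟩ := Finset.exists_max_image
    (Finset.univ.filter fun w => c w ≠ 0) (lenPerm m) ⟨w1, by simp [hw1]⟩
  simp only [Finset.mem_filter, Finset.mem_univ, true_and] at hw0mem
  have h0 := ha w0
  rw [Finset.sum_eq_single w0] at h0
  · have hcne : algebraMap P F (c w0) ≠ 0 := fun h => hw0mem (halg (by simpa using h))
    have hbne : b w0 w0 ≠ 0 := by
      have := hb3 w0 (by rw [(hR w0).1]; exact (hR w0).2)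
      rwa [(hR w0).1] at this
    exact mul_ne_zero hcne hbne h0
  · intro w _ hne
    by_contra hterm
    have hcw : c w ≠ 0 := fun h => hterm (by simp [h])
    have hbw : b w w0 ≠ 0 := fun h => hterm (by simp [h])
    have hle : lenPerm m w0 ≤ (R w).length := (hb2 w w0 hbw).1
    have hmax := hw0max w (by simp [hcw])
    have heq : lenPerm m w0 = (R w).length := by
      have := (hR w).2
      omega
    have := (hb2 w w0 hbw).2 heq
    rw [(hR w).1] at this
    exact hne this.symm
  · intro h
    exact absurd (Finset.mem_univ w0) h


end Key

/-- Faithfulness of the polynomial representation of the nil-Hecke algebra `NH_m`: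
the operators `f ⬝ ∂_w` (`f ∈ P`, `w ∈ S_m`, `∂_w` the composite Demazure operator
along a reduced word for `w`) are linearly independent, i.e. any `P`-linear
combination `∑_w c_w ∂_w` acting as zero on `P` has all coefficients zero. -/
theorem nilHecke_faithful (k : Type*) [Field k] [CharZero k]
    (D : {l : ℕ // l + 1 < m} → Module.End k (MvPolynomial (Fin m) k))
    (hD : ∀ (l : {l : ℕ // l + 1 < m}) (f : MvPolynomial (Fin m) k),
      (X ⟨l, Nat.lt_of_succ_lt l.2⟩ - X ⟨(l : ℕ) + 1, l.2⟩) * D l f =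
        f - rename (simpleRefl m l) f)
    (R : Equiv.Perm (Fin m) → List {l : ℕ // l + 1 < m})
    (hR : ∀ w : Equiv.Perm (Fin m),
      ((R w).map (simpleRefl m)).prod = w ∧ (R w).length = lenPerm m w)
    (c : Equiv.Perm (Fin m) → MvPolynomial (Fin m) k)
    (hzero : ∑ w : Equiv.Perm (Fin m),
      (LinearMap.mulLeft k (c w) : Module.End k (MvPolynomial (Fin m) k))
        * ((R w).map D).prod = 0) :
    ∀ w : Equiv.Perm (Fin m), c w = 0 :=
  nilHecke_faithful' m k D hD R hR c hzero
end
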